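/- Let P be a diagonalizable stochastic matrix with all eigenvalues positive, and let H be the candidate of P (H = T log D T⁻¹ for any real diagonalization P = T D T⁻¹). Then H·1 = 0, where 1 is the all-ones column vector, i.e., each row of H sums to zero. -/
import Mathlib


open Matrix

/-- `P` is a stochastic matrix: nonnegative entries, rows sum to 1. -/
def IsStochastic {n : ℕ} (P : Matrix (Fin n) (Fin n) ℝ) : Prop :=
  (∀ i j, 0 ≤ P i j) ∧ ∀ i, ∑ j, P i j = 1

theorem candidate_row_sums_zero {n : ℕ}
    (P T H : Matrix (Fin n) (Fin n) ℝ) (lam : Fin n → ℝ)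
    (hP : IsStochastic P)
    (hlam : ∀ i, 0 < lam i) (hT : IsUnit T)
    (hdiag : P = T * Matrix.diagonal lam * T⁻¹)
    (hH : H = T * Matrix.diagonal (fun i => Real.log (lam i)) * T⁻¹) :
    H *ᵥ (fun _ => (1 : ℝ)) = 0 := by
  have hdet : IsUnit T.det := (Matrix.isUnit_iff_isUnit_det T).mp hT
  have hTT : T⁻¹ * T = 1 := Matrix.nonsing_inv_mul T hdet
  have hP1 : P *ᵥ (fun _ => (1 : ℝ)) = fun _ => 1 := by
    funext i
    simp [Matrix.mulVec, dotProduct, hP.2 i]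
  set v : Fin n → ℝ := T⁻¹ *ᵥ (fun _ => (1 : ℝ)) with hv
  have hDv : Matrix.diagonal lam *ᵥ v = v := by
    have h1 : T⁻¹ *ᵥ (P *ᵥ (fun _ => (1 : ℝ))) = v := by rw [hP1]
    rw [hdiag] at h1
    rw [show T⁻¹ *ᵥ ((T * Matrix.diagonal lam * T⁻¹) *ᵥ fun _ => (1:ℝ))
        = (T⁻¹ * (T * Matrix.diagonal lam * T⁻¹)) *ᵥ fun _ => (1:ℝ) from
      (Matrix.mulVec_mulVec _ _ _)] at h1
    rw [show T⁻¹ * (T * Matrix.diagonal lam * T⁻¹)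
        = Matrix.diagonal lam * T⁻¹ by
      rw [← Matrix.mul_assoc, ← Matrix.mul_assoc, hTT, Matrix.one_mul]] at h1
    rw [← Matrix.mulVec_mulVec] at h1
    exact h1
  have hlog : Matrix.diagonal (fun i => Real.log (lam i)) *ᵥ v = 0 := by
    funext i
    have hi : lam i * v i = v i := by
      have := congrFun hDv i
      simpa [Matrix.mulVec_diagonal] using this
    simp only [Matrix.mulVec_diagonal, Pi.zero_apply]
    rcases eq_or_ne (v i) 0 with h | h
    · simp [h]
    · have : lam i = 1 := by
        have h2 : lam i * v i = 1 * v i := by rw [one_mul]; exact hi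
        exact mul_right_cancel₀ h h2
      simp [this]
  rw [hH, ← Matrix.mulVec_mulVec, ← Matrix.mulVec_mulVec, ← hv, hlog,
    Matrix.mulVec_zero]
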